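/- Suppose |V_c| = 1 for every prompt c and let C := min_c |E_c| + 1. Then the average misclassification rate over a uniformly random threshold satisfies E_{t∼Unif[0,1]}[erriv(f̂_t)] ≤ (1/2)·(1/(C−1) + 1)·err. -/

import Mathlib

open Finset

open scoped Classical

open MeasureTheory


lemma stepInt_ge (p K : ℝ) : IntervalIntegrable (fun t => if p ≤ t then K else 0) volume 0 1 := by
  have h : (fun t : ℝ => if p ≤ t then K else 0) = (Set.Ici p).indicator (fun _ => K) := by
    funext t; simp [Set.indicator_apply]
  rw [h, intervalIntegrable_iff]
  exact ((integrableOn_const_iff).mpr (Or.inr (by simp))).indicator measurableSet_Ici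

lemma stepInt_lt (p K : ℝ) : IntervalIntegrable (fun t => if t < p then K else 0) volume 0 1 := by
  have h : (fun t : ℝ => if t < p then K else 0) = (Set.Iio p).indicator (fun _ => K) := by
    funext t; simp [Set.indicator_apply]
  rw [h, intervalIntegrable_iff]
  exact ((integrableOn_const_iff).mpr (Or.inr (by simp))).indicator measurableSet_Iio

lemma stepVal_ge (p K : ℝ) (hp0 : 0 ≤ p) (hp1 : p ≤ 1) :
    ∫ t in (0:ℝ)..1, (if p ≤ t then K else 0) = K * (1 - p) := by
  have h : (fun t : ℝ => if p ≤ t then K else 0) = (Set.Ici p).indicator (fun _ => K) := by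
    funext t; simp [Set.indicator_apply]
  rw [intervalIntegral.integral_of_le (by norm_num : (0:ℝ) ≤ 1), h,
    setIntegral_indicator measurableSet_Ici, setIntegral_const]
  have hvol : volume (Set.Ioc (0:ℝ) 1 ∩ Set.Ici p) = ENNReal.ofReal (1 - p) := by
    apply le_antisymm
    · calc volume (Set.Ioc (0:ℝ) 1 ∩ Set.Ici p) ≤ volume (Set.Icc p 1) := by
            apply measure_mono; rintro t ⟨⟨_, ht1⟩, htp⟩; exact ⟨htp, ht1⟩
        _ = ENNReal.ofReal (1 - p) := by rw [Real.volume_Icc]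
    · calc ENNReal.ofReal (1 - p) = volume (Set.Ioc p 1) := (Real.volume_Ioc).symm
        _ ≤ _ := by
            apply measure_mono; rintro t ⟨htp, ht1⟩
            exact ⟨⟨lt_of_le_of_lt hp0 htp, ht1⟩, le_of_lt htp⟩
  rw [Measure.real, hvol, ENNReal.toReal_ofReal (by linarith), smul_eq_mul, mul_comm]

lemma stepVal_lt (p K : ℝ) (hp0 : 0 ≤ p) (hp1 : p ≤ 1) :
    ∫ t in (0:ℝ)..1, (if t < p then K else 0) = K * p := by
  have h : (fun t : ℝ => if t < p then K else 0) = (Set.Iio p).indicator (fun _ => K) := by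
    funext t; simp [Set.indicator_apply]
  rw [intervalIntegral.integral_of_le (by norm_num : (0:ℝ) ≤ 1), h,
    setIntegral_indicator measurableSet_Iio, setIntegral_const]
  have hvol : volume (Set.Ioc (0:ℝ) 1 ∩ Set.Iio p) = ENNReal.ofReal p := by
    apply le_antisymm
    · calc volume (Set.Ioc (0:ℝ) 1 ∩ Set.Iio p) ≤ volume (Set.Icc 0 p) := by
            apply measure_mono; rintro t ⟨⟨ht0, _⟩, htp⟩; exact ⟨le_of_lt ht0, le_of_lt htp⟩
        _ = ENNReal.ofReal (p - 0) := by rw [Real.volume_Icc]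
        _ = ENNReal.ofReal p := by ring_nf
    · calc ENNReal.ofReal p = ENNReal.ofReal (p - 0) := by ring_nf
        _ = volume (Set.Ioo (0:ℝ) p) := (Real.volume_Ioo).symm
        _ ≤ _ := by
            apply measure_mono; rintro t ⟨ht0, htp⟩
            exact ⟨⟨ht0, le_trans (le_of_lt htp) hp1⟩, htp⟩
  rw [Measure.real, hvol, ENNReal.toReal_ofReal hp0, smul_eq_mul, mul_comm]

section helpers
variable {C R : Type}

private noncomputable def gfun (a : C → R) (phat : C → R → ℝ) (D : C → R → ℝ)
    (c : C) (r : R) (t : ℝ) : ℝ :=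
  if (r = a c ∧ ¬ (phat c r > t)) ∨ (r ≠ a c ∧ phat c r > t) then D c r else 0

private lemma gfun_eq_ge (a : C → R) (phat : C → R → ℝ) (D : C → R → ℝ) (c : C) (r : R)
    (hr : r = a c) : gfun a phat D c r = fun t => if phat c r ≤ t then D c r else 0 := by
  funext t
  by_cases h : phat c r ≤ t <;> simp [gfun, hr, h, not_lt, lt_of_not_ge]

private lemma gfun_eq_lt (a : C → R) (phat : C → R → ℝ) (D : C → R → ℝ) (c : C) (r : R)
    (hr : r ≠ a c) : gfun a phat D c r = fun t => if t < phat c r then D c r else 0 := by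
  funext t
  by_cases h : t < phat c r <;> simp [gfun, hr, h]

private lemma gfun_intble (a : C → R) (phat : C → R → ℝ) (D : C → R → ℝ) (c : C) (r : R) :
    IntervalIntegrable (gfun a phat D c r) volume 0 1 := by
  by_cases hr : r = a c
  · rw [gfun_eq_ge a phat D c r hr]; exact stepInt_ge _ _
  · rw [gfun_eq_lt a phat D c r hr]; exact stepInt_lt _ _

private lemma gfun_integral (a : C → R) (phat : C → R → ℝ) (D : C → R → ℝ) (c : C) (r : R)
    (h0 : 0 ≤ phat c r) (h1 : phat c r ≤ 1) :
    ∫ t in (0:ℝ)..1, gfun a phat D c r t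
      = D c r * (if r = a c then 1 - phat c r else phat c r) := by
  by_cases hr : r = a c
  · rw [gfun_eq_ge a phat D c r hr, if_pos hr]; exact stepVal_ge _ _ h0 h1
  · rw [gfun_eq_lt a phat D c r hr, if_neg hr]; exact stepVal_lt _ _ h0 h1

end helpers

set_option maxHeartbeats 1000000 in
/-- In the pure multiple-choice setting, the misclassification rate of
`f̂_t`, averaged over a uniformly random threshold `t ∈ [0,1]`, satisfies
`E_t[erriv(f̂_t)] ≤ (1/2)·(1/(Cnum−1) + 1)·err`. -/
theorem stmt6 {C R : Type} [Fintype C] [Nonempty C] [Fintype R]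
    (μ : C → ℝ) (hμ0 : ∀ c, 0 ≤ μ c) (hμ1 : ∑ c, μ c = 1)
    (Rset : C → Finset R) (a : C → R)
    (ha : ∀ c, a c ∈ Rset c)
    (hEne : ∀ c, (Rset c \ {a c}).Nonempty)
    (phat : C → R → ℝ)
    (hphat0 : ∀ c r, 0 ≤ phat c r)
    (hphat1 : ∀ c, ∑ r ∈ Rset c, phat c r = 1)
    (hphatsupp : ∀ c, ∀ r ∉ Rset c, phat c r = 0) :
    -- number of choices C = min_c |E_c| + 1
    let Cnum : ℕ := (Finset.univ.inf' Finset.univ_nonempty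
      (fun c => (Rset c \ {a c}).card)) + 1
    -- D: with prob 1/2 draw c ∼ μ and r = a_c; with prob 1/2 draw c ∼ μ and r uniform in E_c
    let D : C → R → ℝ := fun c r => (if r = a c then μ c / 2 else 0) +
      (if r ∈ Rset c \ {a c} then μ c / (2 * ((Rset c \ {a c}).card : ℝ)) else 0)
    -- misclassification rate of the thresholded classifier f̂_t
    let erriv : ℝ → ℝ := fun t => ∑ c, ∑ r ∈ Rset c,
      if (r = a c ∧ ¬ (phat c r > t)) ∨ (r ≠ a c ∧ phat c r > t) then D c r else 0
    -- generative error rate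
    let err : ℝ := ∑ c, μ c * ∑ r ∈ Rset c \ {a c}, phat c r
    -- average over t ∼ Unif[0,1]
    (∫ t in (0:ℝ)..1, erriv t) ≤ (1 / 2) * (1 / ((Cnum : ℝ) - 1) + 1) * err := by
  intro Cnum D erriv err
  have hple : ∀ c r, r ∈ Rset c → phat c r ≤ 1 := fun c r hr => by
    rw [← hphat1 c]
    exact Finset.single_le_sum (fun i _ => hphat0 c i) hr
  -- abbreviations
  set m : ℕ := Finset.univ.inf' Finset.univ_nonempty (fun c => (Rset c \ {a c}).card) with hm
  have hmle : ∀ c : C, (m : ℝ) ≤ ((Rset c \ {a c}).card : ℝ) := fun c => by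
    exact_mod_cast Finset.inf'_le _ (Finset.mem_univ c)
  have hm1 : (1:ℝ) ≤ (m:ℝ) := by
    exact_mod_cast Finset.le_inf' _ _ (fun c _ => Finset.card_pos.mpr (hEne c))
  have hCnum : ((Cnum : ℝ) - 1) = (m:ℝ) := by
    have : Cnum = m + 1 := rfl
    rw [this]; push_cast; ring
  -- rewrite the integral
  have herriv : erriv = fun t => ∑ c, ∑ r ∈ Rset c, gfun a phat D c r t := rfl
  have hswap : (∫ t in (0:ℝ)..1, erriv t)
      = ∑ c, ∑ r ∈ Rset c, ∫ t in (0:ℝ)..1, gfun a phat D c r t := by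
    have hintc : ∀ c, IntervalIntegrable (fun t => ∑ r ∈ Rset c, gfun a phat D c r t)
        volume 0 1 := by
      intro c
      have h := IntervalIntegrable.sum (μ := volume) (a := (0:ℝ)) (b := 1) (Rset c)
        (f := fun r => gfun a phat D c r) (fun r _ => gfun_intble a phat D c r)
      have he : (∑ r ∈ Rset c, gfun a phat D c r)
          = fun t => ∑ r ∈ Rset c, gfun a phat D c r t := by
        funext t; rw [Finset.sum_apply]
      rwa [he] at h
    have h1 : (∫ t in (0:ℝ)..1, ∑ c, ∑ r ∈ Rset c, gfun a phat D c r t)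
        = ∑ c, ∫ t in (0:ℝ)..1, ∑ r ∈ Rset c, gfun a phat D c r t :=
      intervalIntegral.integral_finset_sum
        (f := fun c t => ∑ r ∈ Rset c, gfun a phat D c r t) (fun c _ => hintc c)
    rw [herriv]
    exact h1.trans (Finset.sum_congr rfl fun c _ =>
      intervalIntegral.integral_finset_sum (fun r _ => gfun_intble a phat D c r))
  rw [hswap, hCnum]
  -- per-c value
  have hDval : ∀ c, D c (a c) = μ c / 2 := by
    intro c; simp [D]
  have hDerr : ∀ c r, r ∈ Rset c \ {a c} →
      D c r = μ c / (2 * ((Rset c \ {a c}).card : ℝ)) := by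
    intro c r hr
    have hne : r ≠ a c := by
      rcases Finset.mem_sdiff.mp hr with ⟨_, h2⟩
      simpa using h2
    have hrR : r ∈ Rset c := (Finset.mem_sdiff.mp hr).1
    simp [D, hne, hrR]
  have hSnn : ∀ c, 0 ≤ ∑ r ∈ Rset c \ {a c}, phat c r := fun c =>
    Finset.sum_nonneg (fun r _ => hphat0 c r)
  have hval : ∀ c, ∑ r ∈ Rset c, ∫ t in (0:ℝ)..1, gfun a phat D c r t
      ≤ (1 / 2) * (1 / (m:ℝ) + 1) * (μ c * ∑ r ∈ Rset c \ {a c}, phat c r) := by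
    intro c
    have hsd : Rset c \ {a c} = (Rset c).erase (a c) := by
      rw [Finset.erase_eq]
    have hsum : ∑ r ∈ Rset c, (∫ t in (0:ℝ)..1, gfun a phat D c r t)
        = ∑ r ∈ Rset c \ {a c}, (∫ t in (0:ℝ)..1, gfun a phat D c r t)
          + ∫ t in (0:ℝ)..1, gfun a phat D c (a c) t := by
      rw [hsd, Finset.sum_erase_add _ _ (ha c)]
    rw [hsum]
    -- value of the a c term
    have hva : (∫ t in (0:ℝ)..1, gfun a phat D c (a c) t)
        = (μ c / 2) * (∑ r ∈ Rset c \ {a c}, phat c r) := by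
      rw [gfun_integral a phat D c (a c) (hphat0 c (a c)) (hple c (a c) (ha c)),
        if_pos rfl, hDval c]
      have h1 : (1:ℝ) - phat c (a c) = ∑ r ∈ Rset c \ {a c}, phat c r := by
        have := hphat1 c
        rw [hsd] at *
        rw [← Finset.sum_erase_add _ _ (ha c)] at this
        linarith
      rw [h1]
    -- bound for erroneous terms
    have hvb : ∑ r ∈ Rset c \ {a c}, (∫ t in (0:ℝ)..1, gfun a phat D c r t)
        = (μ c / (2 * ((Rset c \ {a c}).card : ℝ))) * ∑ r ∈ Rset c \ {a c}, phat c r := by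
      rw [Finset.mul_sum]
      refine Finset.sum_congr rfl (fun r hr => ?_)
      have hrR : r ∈ Rset c := (Finset.mem_sdiff.mp hr).1
      have hne : r ≠ a c := by
        have := (Finset.mem_sdiff.mp hr).2; simpa using this
      rw [gfun_integral a phat D c r (hphat0 c r) (hple c r hrR), if_neg hne, hDerr c r hr]
    rw [hva, hvb]
    have hcard : (1:ℝ) ≤ ((Rset c \ {a c}).card : ℝ) := le_trans hm1 (hmle c)
    have hbound : μ c / (2 * ((Rset c \ {a c}).card : ℝ)) ≤ μ c / (2 * (m:ℝ)) := by
      apply div_le_div_of_nonneg_left (hμ0 c) (by linarith) 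
      · nlinarith [hmle c]
    have := mul_le_mul_of_nonneg_right hbound (hSnn c)
    have hfin : μ c / (2 * (m:ℝ)) * (∑ r ∈ Rset c \ {a c}, phat c r)
        + μ c / 2 * (∑ r ∈ Rset c \ {a c}, phat c r)
        = (1 / 2) * (1 / (m:ℝ) + 1) * (μ c * ∑ r ∈ Rset c \ {a c}, phat c r) := by
      field_simp
    linarith
  calc ∑ c, ∑ r ∈ Rset c, ∫ t in (0:ℝ)..1, gfun a phat D c r t
      ≤ ∑ c, (1 / 2) * (1 / (m:ℝ) + 1) * (μ c * ∑ r ∈ Rset c \ {a c}, phat c r) :=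
        Finset.sum_le_sum (fun c _ => hval c)
    _ = (1 / 2) * (1 / (m:ℝ) + 1) * err := by rw [← Finset.mul_sum]
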